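/- arXiv:1310.7838 — 2 statements merged into one kernel-verified Lean document; each statement's English description precedes it below -/
import Mathlib

section
/- Let n be odd, J < n/2, and θ_l = -(n+1)π/n + 2πl/n. Define the smoothing kernel S_l(θ) = 1/n + (2/n)∑_{j=1}^J cos(j(θ − θ_l)). Let ρ: ℝ → ℝ be 2π-periodic and even. Then for all m ∈ {1,…,n} and θ ∈ [-π,π]: ∑_{l=1}^n ρ(θ_m − θ_l) S_l(θ) = σ²₀,ₙ + ∑_{j=1}^J σ²ⱼ,ₙ cos(j(θ − θ_m)), where σ²₀,ₙ = (1/n)∑_l ρ(θ_l) and σ²ⱼ,ₙ = (2/n)∑_l ρ(θ_l)cos(jθ_l). -/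
open Real Finset

private lemma coe_inj_aux (n : ℕ) {l₁ l₂ : ℕ} (h1 : l₁ ∈ Finset.Icc 1 n)
    (h2 : l₂ ∈ Finset.Icc 1 n)
    (h : ((l₁ : ℤ) : ZMod n) = ((l₂ : ℤ) : ZMod n)) : l₁ = l₂ := by
  rw [ZMod.intCast_eq_intCast_iff] at h
  have hd : (n : ℤ) ∣ (l₂ : ℤ) - l₁ := h.dvd
  simp only [Finset.mem_Icc] at h1 h2
  have habs : |(l₂ : ℤ) - l₁| < n := by
    rw [abs_lt]
    constructor <;> omega
  have := Int.eq_zero_of_abs_lt_dvd hd habs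
  omega

/-- Value of a periodic function at a grid point depends only on the residue mod n. -/
private lemma cast_arg (n : ℕ) [NeZero n] (f : ℝ → ℝ)
    (hf : Function.Periodic f (2 * Real.pi)) (b : ℤ) :
    f (2 * Real.pi * b / n) =
      f (2 * Real.pi * ((((b : ZMod n)).val : ℕ) : ℝ) / n) := by
  have hn : 0 < n := Nat.pos_of_ne_zero (NeZero.ne n)
  have hv : ((((b : ZMod n)).val : ℕ) : ℤ) = b % n := ZMod.val_intCast b
  have hb : b = ((((b : ZMod n)).val : ℕ) : ℤ) + n * (b / n) := by
    rw [hv]; exact (Int.emod_add_mul_ediv b n).symm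
  have hn0 : (n : ℝ) ≠ 0 := Nat.cast_ne_zero.mpr hn.ne'
  have hbr : (b : ℝ) = ((((b : ZMod n)).val : ℕ) : ℝ) + (n : ℝ) * ((b / n : ℤ) : ℝ) := by
    exact_mod_cast congrArg (Int.cast : ℤ → ℝ) hb
  have harg : 2 * Real.pi * b / n =
      2 * Real.pi * ((((b : ZMod n)).val : ℕ) : ℝ) / n + (b / n : ℤ) * (2 * Real.pi) := by
    rw [hbr]
    field_simp
  rw [harg, (hf.int_mul (b / n)) _]

/-- Sum of a periodic function over a full arithmetic grid equals the sum over `ZMod n`. -/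
private lemma zmod_sum_eq (n : ℕ) [NeZero n] (f : ℝ → ℝ)
    (hf : Function.Periodic f (2 * Real.pi)) (a : ℕ → ℤ)
    (hinj : ∀ l₁ ∈ Finset.Icc 1 n, ∀ l₂ ∈ Finset.Icc 1 n,
      ((a l₁ : ZMod n)) = ((a l₂ : ZMod n)) → l₁ = l₂) :
    ∑ l ∈ Finset.Icc 1 n, f (2 * Real.pi * (a l) / n) =
      ∑ x : ZMod n, f (2 * Real.pi * (x.val : ℝ) / n) := by
  have himg : (Finset.Icc 1 n).image (fun l => ((a l : ZMod n))) = Finset.univ := by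
    apply Finset.eq_univ_of_card
    rw [Finset.card_image_of_injOn (fun l₁ h₁ l₂ h₂ h => hinj l₁ h₁ l₂ h₂ h), Nat.card_Icc]
    simp [ZMod.card]
  rw [← himg, Finset.sum_image (g := fun l => ((a l : ZMod n)))
    (f := fun x : ZMod n => f (2 * Real.pi * (x.val : ℝ) / n))
    (fun l₁ h₁ l₂ h₂ h => hinj l₁ h₁ l₂ h₂ h)]
  exact Finset.sum_congr rfl (fun l _ => cast_arg n f hf (a l))

/-- An odd periodic function sums to zero over the grid. -/
private lemma zmod_sum_zero (n : ℕ) [NeZero n] (f : ℝ → ℝ)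
    (hf : Function.Periodic f (2 * Real.pi)) (hodd : ∀ t, f (-t) = -f t) :
    ∑ x : ZMod n, f (2 * Real.pi * (x.val : ℝ) / n) = 0 := by
  set G : ZMod n → ℝ := fun x => f (2 * Real.pi * (x.val : ℝ) / n) with hGdef
  have hGneg : ∀ x : ZMod n, G (-x) = -G x := by
    intro x
    have h1 : (((x.val : ℤ)) : ZMod n) = x := by
      push_cast
      exact ZMod.natCast_rightInverse x
    have h2 : (((-(x.val : ℤ)) : ℤ) : ZMod n) = -x := by
      rw [Int.cast_neg, h1]
    have h3 := cast_arg n f hf (-(x.val : ℤ))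
    rw [h2] at h3
    have h4 : f (2 * Real.pi * ((-(x.val : ℤ) : ℤ) : ℝ) / n) =
        -f (2 * Real.pi * (x.val : ℝ) / n) := by
      have h5 : (2 : ℝ) * Real.pi * ((-(x.val : ℤ) : ℤ) : ℝ) / n =
          -(2 * Real.pi * (x.val : ℝ) / n) := by push_cast; ring
      rw [h5, hodd]
    simp only [hGdef]
    rw [← h3, h4]
  have hsum : ∑ x : ZMod n, G x = ∑ x : ZMod n, G (-x) :=
    Fintype.sum_equiv (Equiv.neg (ZMod n)) G (fun x => G (-x)) (by intro x; simp)
  have hneg : ∑ x : ZMod n, G (-x) = -∑ x : ZMod n, G x := by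
    simp only [hGneg]
    rw [Finset.sum_neg_distrib]
  linarith [hsum, hneg]

theorem smoothing_kernel_covariance_sum
    (n : ℕ) (hn : 3 ≤ n) (hodd : Odd n)
    (J : ℕ) (hJ : (J : ℝ) < (n : ℝ) / 2)
    (θ : ℕ → ℝ)
    (hθ : ∀ l, θ l = -((n : ℝ) + 1) * Real.pi / n + 2 * Real.pi * l / n)
    (S : ℕ → ℝ → ℝ)
    (hS : ∀ l x, S l x =
      1 / (n : ℝ) + (2 / (n : ℝ)) * ∑ j ∈ Finset.Icc 1 J, Real.cos (j * (x - θ l)))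
    (ρ : ℝ → ℝ) (hρeven : ∀ x, ρ (-x) = ρ x)
    (hρper : Function.Periodic ρ (2 * Real.pi))
    (σ0 : ℝ) (hσ0 : σ0 = (1 / (n : ℝ)) * ∑ l ∈ Finset.Icc 1 n, ρ (θ l))
    (σ : ℕ → ℝ)
    (hσ : ∀ j, σ j = (2 / (n : ℝ)) * ∑ l ∈ Finset.Icc 1 n, ρ (θ l) * Real.cos (j * θ l)) :
    ∀ m ∈ Finset.Icc 1 n, ∀ x ∈ Set.Icc (-Real.pi) Real.pi,
      ∑ l ∈ Finset.Icc 1 n, ρ (θ m - θ l) * S l x =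
        σ0 + ∑ j ∈ Finset.Icc 1 J, σ j * Real.cos (j * (x - θ m)) := by
  intro m hm x hx
  have hnpos : 0 < n := by omega
  haveI : NeZero n := ⟨hnpos.ne'⟩
  have hn0 : (n : ℝ) ≠ 0 := Nat.cast_ne_zero.mpr hnpos.ne'
  obtain ⟨k, hk⟩ := hodd
  set c : ℕ := (n + 1) / 2 with hcdef
  have hc : 2 * c = n + 1 := by omega
  have hcr : 2 * (c : ℝ) = (n : ℝ) + 1 := by exact_mod_cast congrArg (Nat.cast : ℕ → ℝ) hc
  have hcr2 : (c : ℝ) = ((n : ℝ) + 1) / 2 := by linarith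
  -- grid identities
  have hΔ : ∀ l : ℕ, θ m - θ l = 2 * Real.pi * (((m : ℤ) - (l : ℤ) : ℤ) : ℝ) / n := by
    intro l
    rw [hθ m, hθ l]
    push_cast
    field_simp
    ring
  have hθc : ∀ l : ℕ, θ l = 2 * Real.pi * (((l : ℤ) - (c : ℤ) : ℤ) : ℝ) / n := by
    intro l
    rw [hθ l]
    push_cast
    rw [hcr2]
    field_simp
    ring
  -- injectivity of the two index maps
  have hinj1 : ∀ l₁ ∈ Finset.Icc 1 n, ∀ l₂ ∈ Finset.Icc 1 n,
      ((((m : ℤ) - (l₁ : ℤ) : ℤ)) : ZMod n) = ((((m : ℤ) - (l₂ : ℤ) : ℤ)) : ZMod n) → l₁ = l₂ := by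
    intro l₁ h₁ l₂ h₂ h
    apply coe_inj_aux n h₁ h₂
    push_cast at h ⊢
    linear_combination -h
  have hinj2 : ∀ l₁ ∈ Finset.Icc 1 n, ∀ l₂ ∈ Finset.Icc 1 n,
      ((((l₁ : ℤ) - (c : ℤ) : ℤ)) : ZMod n) = ((((l₂ : ℤ) - (c : ℤ) : ℤ)) : ZMod n) → l₁ = l₂ := by
    intro l₁ h₁ l₂ h₂ h
    apply coe_inj_aux n h₁ h₂
    push_cast at h ⊢
    linear_combination h
  -- key identities
  have keyshift : ∀ f : ℝ → ℝ, Function.Periodic f (2 * Real.pi) →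
      ∑ l ∈ Finset.Icc 1 n, f (θ m - θ l) = ∑ l ∈ Finset.Icc 1 n, f (θ l) := by
    intro f hf
    calc ∑ l ∈ Finset.Icc 1 n, f (θ m - θ l)
        = ∑ l ∈ Finset.Icc 1 n, f (2 * Real.pi * (((m : ℤ) - (l : ℤ) : ℤ) : ℝ) / n) :=
          Finset.sum_congr rfl (fun l _ => by rw [hΔ l])
      _ = ∑ y : ZMod n, f (2 * Real.pi * (y.val : ℝ) / n) :=
          zmod_sum_eq n f hf (fun l => (m : ℤ) - (l : ℤ)) hinj1
      _ = ∑ l ∈ Finset.Icc 1 n, f (2 * Real.pi * (((l : ℤ) - (c : ℤ) : ℤ) : ℝ) / n) :=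
          (zmod_sum_eq n f hf (fun l => (l : ℤ) - (c : ℤ)) hinj2).symm
      _ = ∑ l ∈ Finset.Icc 1 n, f (θ l) :=
          Finset.sum_congr rfl (fun l _ => by rw [hθc l])
  have keyzero : ∀ f : ℝ → ℝ, Function.Periodic f (2 * Real.pi) → (∀ t, f (-t) = -f t) →
      ∑ l ∈ Finset.Icc 1 n, f (θ m - θ l) = 0 := by
    intro f hf hfodd
    calc ∑ l ∈ Finset.Icc 1 n, f (θ m - θ l)
        = ∑ l ∈ Finset.Icc 1 n, f (2 * Real.pi * (((m : ℤ) - (l : ℤ) : ℤ) : ℝ) / n) :=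
          Finset.sum_congr rfl (fun l _ => by rw [hΔ l])
      _ = ∑ y : ZMod n, f (2 * Real.pi * (y.val : ℝ) / n) :=
          zmod_sum_eq n f hf (fun l => (m : ℤ) - (l : ℤ)) hinj1
      _ = 0 := zmod_sum_zero n f hf hfodd
  -- periodicity and parity of the auxiliary functions
  have hperc : ∀ j : ℕ, Function.Periodic (fun t => ρ t * Real.cos (j * t)) (2 * Real.pi) := by
    intro j t
    simp only
    rw [hρper t]
    congr 1
    have h1 : (j : ℝ) * (t + 2 * Real.pi) = j * t + j * (2 * Real.pi) := by ring
    rw [h1, Real.cos_add_nat_mul_two_pi]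
  have hpers : ∀ j : ℕ, Function.Periodic (fun t => ρ t * Real.sin (j * t)) (2 * Real.pi) := by
    intro j t
    simp only
    rw [hρper t]
    congr 1
    have h1 : (j : ℝ) * (t + 2 * Real.pi) = j * t + j * (2 * Real.pi) := by ring
    rw [h1, Real.sin_add_nat_mul_two_pi]
  have hodds : ∀ j : ℕ, ∀ t : ℝ, ρ (-t) * Real.sin (j * (-t)) = -(ρ t * Real.sin (j * t)) := by
    intro j t
    have h1 : (j : ℝ) * (-t) = -(j * t) := by ring
    rw [h1, Real.sin_neg, hρeven]
    ring
  have key1 : ∑ l ∈ Finset.Icc 1 n, ρ (θ m - θ l) = ∑ l ∈ Finset.Icc 1 n, ρ (θ l) :=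
    keyshift ρ hρper
  have key2 : ∀ j : ℕ, ∑ l ∈ Finset.Icc 1 n, ρ (θ m - θ l) * Real.cos (j * (θ m - θ l)) =
      ∑ l ∈ Finset.Icc 1 n, ρ (θ l) * Real.cos (j * θ l) :=
    fun j => keyshift (fun t => ρ t * Real.cos (j * t)) (hperc j)
  have key3 : ∀ j : ℕ, ∑ l ∈ Finset.Icc 1 n, ρ (θ m - θ l) * Real.sin (j * (θ m - θ l)) = 0 :=
    fun j => keyzero (fun t => ρ t * Real.sin (j * t)) (hpers j) (hodds j)
  -- main algebra
  calc ∑ l ∈ Finset.Icc 1 n, ρ (θ m - θ l) * S l x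
      = ∑ l ∈ Finset.Icc 1 n, ((1 / (n : ℝ)) * ρ (θ m - θ l)
          + ∑ j ∈ Finset.Icc 1 J,
              ((2 / (n : ℝ)) * Real.cos (j * (x - θ m)) * (ρ (θ m - θ l) * Real.cos (j * (θ m - θ l)))
                - (2 / (n : ℝ)) * Real.sin (j * (x - θ m)) * (ρ (θ m - θ l) * Real.sin (j * (θ m - θ l))))) := by
        refine Finset.sum_congr rfl fun l _ => ?_
        rw [hS l x, mul_add]
        congr 1
        · ring
        · rw [Finset.mul_sum, Finset.mul_sum]
          refine Finset.sum_congr rfl fun j _ => ?_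
          have h1 : (j : ℝ) * (x - θ l) = j * (x - θ m) + j * (θ m - θ l) := by ring
          rw [h1, Real.cos_add]
          ring
    _ = (1 / (n : ℝ)) * ∑ l ∈ Finset.Icc 1 n, ρ (θ m - θ l)
        + ∑ j ∈ Finset.Icc 1 J,
            ((2 / (n : ℝ)) * Real.cos (j * (x - θ m)) * (∑ l ∈ Finset.Icc 1 n, ρ (θ m - θ l) * Real.cos (j * (θ m - θ l)))
              - (2 / (n : ℝ)) * Real.sin (j * (x - θ m)) * (∑ l ∈ Finset.Icc 1 n, ρ (θ m - θ l) * Real.sin (j * (θ m - θ l)))) := by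
        rw [Finset.sum_add_distrib, Finset.sum_comm]
        congr 1
        · rw [Finset.mul_sum]
        · refine Finset.sum_congr rfl fun j _ => ?_
          rw [Finset.sum_sub_distrib, Finset.mul_sum, Finset.mul_sum]
    _ = σ0 + ∑ j ∈ Finset.Icc 1 J, σ j * Real.cos (j * (x - θ m)) := by
        rw [key1, ← hσ0]
        congr 1
        refine Finset.sum_congr rfl fun j _ => ?_
        rw [key2 j, key3 j, hσ j]
        ring
end

section
/- Let n be odd, J < n/2, θ_l = -(n+1)π/n + 2πl/n, and S_l(θ) = 1/n + (2/n)∑_{j=1}^J cos(j(θ − θ_l)). Let ρ be even and 2π-periodic with discrete Fourier coefficients σ²ⱼ,ₙ as above. Then the double sum ∑_{l=1}^n ∑_{m=1}^n ρ(θ_m − θ_l) S_l(θ) S_m(η) = σ²₀,ₙ + ∑_{j=1}^J σ²ⱼ,ₙ cos(j(η − θ)), i.e., it depends only on η − θ. -/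
open Real Finset

lemma cos_sum_zero (n : ℕ) (hn : 0 < n) (t : ℤ) (ht : ¬ (n:ℤ) ∣ t) (φ : ℝ) :
    ∑ m ∈ Finset.Icc 1 n, Real.cos (2 * π * t * m / n + φ) = 0 := by
  have hn0 : (n:ℂ) ≠ 0 := Nat.cast_ne_zero.mpr hn.ne'
  set z : ℂ := Complex.exp (2 * π * Complex.I * t / n) with hz
  have h2pi : (2 * (π:ℂ) * Complex.I) ≠ 0 := by
    simp [Real.pi_ne_zero, Complex.I_ne_zero]
  have hzn : z ^ n = 1 := by
    rw [hz, ← Complex.exp_nat_mul]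
    have : (n:ℂ) * (2 * π * Complex.I * t / n) = t * (2 * π * Complex.I) := by
      field_simp
    rw [this, Complex.exp_int_mul_two_pi_mul_I]
  have hz1 : z ≠ 1 := by
    intro h
    rw [hz, Complex.exp_eq_one_iff] at h
    obtain ⟨k, hk⟩ := h
    apply ht
    have h2 : (t:ℂ) * (2 * π * Complex.I) = (k * n : ℤ) * (2 * π * Complex.I) := by
      field_simp at hk
      push_cast
      linear_combination (2 * (π:ℂ) * Complex.I) * hk
    have h3 : (t:ℂ) = ((k*n : ℤ):ℂ) := mul_right_cancel₀ h2pi h2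
    have : t = k * n := by exact_mod_cast h3
    exact ⟨k, by rw [this]; ring⟩
  have hgeom : ∑ m ∈ Finset.Icc 1 n, z ^ m = 0 := by
    have h1 : ∑ m ∈ Finset.range (n+1), z ^ m = (z ^ (n+1) - 1) / (z - 1) :=
      geom_sum_eq hz1 _
    have h2 : z ^ (n+1) = z := by rw [pow_succ, hzn, one_mul]
    have h3 : Finset.range (n+1) = insert 0 (Finset.Icc 1 n) := by
      ext m; simp [Finset.mem_range, Finset.mem_Icc]; omega
    rw [h3, Finset.sum_insert (by simp), h2] at h1
    have : (z - 1) / (z - 1) = 1 := div_self (sub_ne_zero.mpr hz1)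
    rw [this] at h1
    simp only [pow_zero] at h1
    linear_combination h1
  -- now take real parts
  have key : ∀ m : ℕ, Real.cos (2 * π * t * m / n + φ) =
      (Complex.exp ((φ:ℂ) * Complex.I) * z ^ m).re := by
    intro m
    have hzm : z ^ m = Complex.exp ((2 * π * Complex.I * t / n) * m) := by
      rw [hz, ← Complex.exp_nat_mul]; ring_nf
    rw [hzm, ← Complex.exp_add]
    have harg : (φ:ℂ) * Complex.I + (2 * π * Complex.I * t / n) * m
        = ((2 * π * t * m / n + φ : ℝ) : ℂ) * Complex.I := by
      push_cast
      field_simp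
      ring
    rw [harg, Complex.exp_ofReal_mul_I_re]
  calc ∑ m ∈ Finset.Icc 1 n, Real.cos (2 * π * t * m / n + φ)
      = ∑ m ∈ Finset.Icc 1 n, (Complex.exp ((φ:ℂ) * Complex.I) * z ^ m).re := by
        exact Finset.sum_congr rfl fun m _ => key m
    _ = (Complex.exp ((φ:ℂ) * Complex.I) * ∑ m ∈ Finset.Icc 1 n, z ^ m).re := by
        rw [Finset.mul_sum, Complex.re_sum]
    _ = 0 := by rw [hgeom, mul_zero, Complex.zero_re]

lemma sum_step (n : ℕ) (G : ℤ → ℝ) (hG : ∀ k, G (k + n) = G k) (b : ℤ) :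
    ∑ m ∈ Finset.Icc 1 n, G (m + (b+1)) = ∑ m ∈ Finset.Icc 1 n, G (m + b) := by
  rcases Nat.eq_zero_or_pos n with h | h
  · subst h; simp
  set H : ℕ → ℝ := fun k => G (1 + k + b) with hH
  have l1 : ∑ m ∈ Finset.Icc 1 n, G (m + (b+1)) = ∑ k ∈ Finset.range n, H (k+1) := by
    rw [show Finset.Icc 1 n = Finset.Ico 1 (n+1) from by rw [Finset.Ico_add_one_right_eq_Icc],
        Finset.sum_Ico_eq_sum_range]
    apply Finset.sum_congr (by congr 1)
    intro k _
    simp only [hH]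
    congr 1 <;> omega
  have l2 : ∑ m ∈ Finset.Icc 1 n, G (m + b) = ∑ k ∈ Finset.range n, H k := by
    rw [show Finset.Icc 1 n = Finset.Ico 1 (n+1) from by rw [Finset.Ico_add_one_right_eq_Icc],
        Finset.sum_Ico_eq_sum_range]
    apply Finset.sum_congr (by congr 1)
    intro k _
    simp only [hH]
    congr 1 <;> omega
  have hHn : H n = H 0 := by
    simp only [hH]
    have : (1:ℤ) + n + b = (1 + (0:ℕ) + b) + n := by push_cast; ring
    rw [this, hG]
  have e1 := Finset.sum_range_succ' H n
  have e2 := Finset.sum_range_succ H n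
  rw [l1, l2]
  linarith [e1, e2, hHn]

lemma sum_shift (n : ℕ) (G : ℤ → ℝ) (hG : ∀ k, G (k + n) = G k) (a : ℤ) :
    ∑ m ∈ Finset.Icc 1 n, G (m + a) = ∑ m ∈ Finset.Icc 1 n, G m := by
  induction a using Int.induction_on with
  | zero => simp
  | succ a ih =>
    rw [show ((a:ℤ)+1) = (a:ℤ)+1 from rfl, sum_step n G hG a, ih]
  | pred a ih =>
    have hstep := sum_step n G hG (-(a:ℤ)-1)
    rw [show (-(a:ℤ)-1+1) = -(a:ℤ) from by ring] at hstep
    rw [← ih, hstep]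

lemma grid_cos_sum (n : ℕ) (hn : 0 < n) (θ : ℕ → ℝ)
    (hθ : ∀ l, θ l = -((n:ℝ)+1) * π / n + 2 * π * l / n)
    (t : ℤ) (ht : ¬ (n:ℤ) ∣ t) (φ : ℝ) :
    ∑ l ∈ Finset.Icc 1 n, Real.cos (t * θ l + φ) = 0 := by
  have hn0 : (n:ℝ) ≠ 0 := Nat.cast_ne_zero.mpr hn.ne'
  have h := cos_sum_zero n hn t ht (φ - t * ((n:ℝ)+1) * π / n)
  rw [← h]
  apply Finset.sum_congr rfl
  intro l _
  congr 1
  rw [hθ l]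
  field_simp
  ring

lemma rho_sin_sum (n : ℕ) (hodd : Odd n) (θ : ℕ → ℝ)
    (hθ : ∀ l, θ l = -((n:ℝ)+1) * π / n + 2 * π * l / n)
    (ρ : ℝ → ℝ) (hρeven : ∀ x, ρ (-x) = ρ x) (c : ℝ) :
    ∑ m ∈ Finset.Icc 1 n, ρ (θ m) * Real.sin (c * θ m) = 0 := by
  have hn0 : (n:ℝ) ≠ 0 := by
    have : 0 < n := hodd.pos
    exact Nat.cast_ne_zero.mpr this.ne'
  have hrefl : ∀ m, m ∈ Finset.Icc 1 n → θ (n+1-m) = - θ m := by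
    intro m hm
    simp only [Finset.mem_Icc] at hm
    rw [hθ, hθ]
    have hc : ((n+1-m : ℕ) : ℝ) = (n:ℝ) + 1 - m := by
      have hle : m ≤ n + 1 := by omega
      push_cast [hle]
      ring
    rw [hc]
    field_simp
    ring
  apply Finset.sum_involution (fun m _ => n + 1 - m)
  · intro m hm
    rw [hrefl m hm, hρeven, show c * -θ m = -(c * θ m) from by ring, Real.sin_neg]
    ring
  · intro m hm hf hgm
    apply hf
    -- from n+1-m = m and n odd: θ m = 0
    simp only [Finset.mem_Icc] at hm
    have h2m : 2 * m = n + 1 := by omega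
    have hθ0 : θ m = 0 := by
      rw [hθ]
      have : (2 * m : ℝ) = (n:ℝ) + 1 := by exact_mod_cast congrArg (fun x : ℕ => (x:ℝ)) h2m
      field_simp
      linear_combination π * this
    rw [hθ0, mul_zero, Real.sin_zero, mul_zero]
  · intro m hm
    simp only [Finset.mem_Icc] at hm ⊢
    omega
  · intro m hm
    simp only [Finset.mem_Icc] at hm
    omega

lemma cos_mul_cos' (A B : ℝ) : Real.cos A * Real.cos B
    = (Real.cos (A - B) + Real.cos (A + B)) / 2 := by
  rw [Real.cos_sub, Real.cos_add]; ring

lemma not_dvd_of_small (n : ℕ) (t : ℤ) (ht0 : t ≠ 0) (htn : |t| < n) : ¬ (n:ℤ) ∣ t := by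
  intro hd
  have h1 : (n:ℤ) ∣ |t| := (dvd_abs _ _).mpr hd
  have h2 : (n:ℤ) ≤ |t| := Int.le_of_dvd (abs_pos.mpr ht0) h1
  linarith

lemma ortho_sum (n : ℕ) (hn : 0 < n) (θ : ℕ → ℝ)
    (hθ : ∀ l, θ l = -((n:ℝ)+1) * π / n + 2 * π * l / n)
    (J : ℕ) (h2J : 2 * J < n) (i j : ℕ)
    (hi : i ∈ Finset.Icc 1 J) (hj : j ∈ Finset.Icc 1 J) (x η : ℝ) :
    ∑ l ∈ Finset.Icc 1 n, Real.cos (i * (x - θ l)) * Real.cos (j * (η - θ l))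
      = if i = j then ((n:ℝ)/2) * Real.cos (j * (η - x)) else 0 := by
  simp only [Finset.mem_Icc] at hi hj
  have hsplit : ∑ l ∈ Finset.Icc 1 n, Real.cos (i * (x - θ l)) * Real.cos (j * (η - θ l))
      = (∑ l ∈ Finset.Icc 1 n, Real.cos ((i:ℝ) * (x - θ l) - j * (η - θ l))
        + ∑ l ∈ Finset.Icc 1 n, Real.cos ((i:ℝ) * (x - θ l) + j * (η - θ l))) / 2 := by
    rw [← Finset.sum_add_distrib, Finset.sum_div]
    exact Finset.sum_congr rfl fun l _ => cos_mul_cos' _ _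
  have hplus : ∑ l ∈ Finset.Icc 1 n, Real.cos ((i:ℝ) * (x - θ l) + j * (η - θ l)) = 0 := by
    have ht : ¬ (n:ℤ) ∣ (-(i:ℤ) - j) := by
      apply not_dvd_of_small
      · omega
      · rw [abs_of_nonpos (by omega)]; push_cast; omega
    have h := grid_cos_sum n hn θ hθ (-(i:ℤ) - j) ht ((i:ℝ) * x + j * η)
    rw [← h]
    apply Finset.sum_congr rfl
    intro l _
    congr 1
    push_cast
    ring
  rw [hsplit, hplus]
  by_cases hij : i = j
  · subst hij
    rw [if_pos rfl]
    have hconst : ∑ l ∈ Finset.Icc 1 n, Real.cos ((i:ℝ) * (x - θ l) - i * (η - θ l))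
        = (n:ℝ) * Real.cos (i * (η - x)) := by
      have : ∀ l, Real.cos ((i:ℝ) * (x - θ l) - i * (η - θ l)) = Real.cos (i * (η - x)) := by
        intro l
        rw [show (i:ℝ) * (x - θ l) - i * (η - θ l) = -((i:ℝ) * (η - x)) from by ring,
          Real.cos_neg]
      rw [Finset.sum_congr rfl fun l _ => this l, Finset.sum_const, Nat.card_Icc]
      simp
    rw [hconst]
    ring
  · simp only [if_neg hij]
    have ht : ¬ (n:ℤ) ∣ ((j:ℤ) - i) := by
      apply not_dvd_of_small
      · omega
      · rw [abs_sub_lt_iff]; constructor <;> push_cast <;> omega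
    have h := grid_cos_sum n hn θ hθ ((j:ℤ) - i) ht ((i:ℝ) * x - j * η)
    have hminus : ∑ l ∈ Finset.Icc 1 n, Real.cos ((i:ℝ) * (x - θ l) - j * (η - θ l)) = 0 := by
      rw [← h]
      apply Finset.sum_congr rfl
      intro l _
      congr 1
      push_cast
      ring
    rw [hminus]
    ring

theorem smoothing_kernel_double_sum_stationary
    (n : ℕ) (hn : 3 ≤ n) (hodd : Odd n)
    (J : ℕ) (hJ : (J : ℝ) < (n : ℝ) / 2)
    (θ : ℕ → ℝ)
    (hθ : ∀ l, θ l = -((n : ℝ) + 1) * Real.pi / n + 2 * Real.pi * l / n)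
    (S : ℕ → ℝ → ℝ)
    (hS : ∀ l x, S l x =
      1 / (n : ℝ) + (2 / (n : ℝ)) * ∑ j ∈ Finset.Icc 1 J, Real.cos (j * (x - θ l)))
    (ρ : ℝ → ℝ) (hρeven : ∀ x, ρ (-x) = ρ x)
    (hρper : Function.Periodic ρ (2 * Real.pi))
    (σ0 : ℝ) (hσ0 : σ0 = (1 / (n : ℝ)) * ∑ l ∈ Finset.Icc 1 n, ρ (θ l))
    (σ : ℕ → ℝ)
    (hσ : ∀ j, σ j = (2 / (n : ℝ)) * ∑ l ∈ Finset.Icc 1 n, ρ (θ l) * Real.cos (j * θ l)) :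
    ∀ x η : ℝ,
      ∑ l ∈ Finset.Icc 1 n, ∑ m ∈ Finset.Icc 1 n, ρ (θ m - θ l) * S l x * S m η =
        σ0 + ∑ j ∈ Finset.Icc 1 J, σ j * Real.cos (j * (η - x)) := by
  intro x η
  have hnpos : 0 < n := by omega
  have hn0 : (n:ℝ) ≠ 0 := Nat.cast_ne_zero.mpr hnpos.ne'
  have h2J : 2 * J < n := by
    have h : ((2 * J : ℕ) : ℝ) < n := by push_cast; linarith
    exact_mod_cast h
  obtain ⟨c, h2c⟩ : ∃ c : ℕ, n + 1 = 2 * c := by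
    obtain ⟨k, hk⟩ := hodd; exact ⟨k + 1, by omega⟩
  have hcR : (c:ℝ) = ((n:ℝ) + 1) / 2 := by
    have h : ((n:ℝ) + 1) = 2 * c := by exact_mod_cast h2c
    linarith
  have hθc : ∀ m : ℕ, θ m = 2 * π * ((m:ℝ) - c) / n := by
    intro m; rw [hθ m, hcR]; field_simp; ring
  have hθdiff : ∀ m l : ℕ, θ m - θ l = 2 * π * ((m:ℝ) - l) / n := by
    intro m l; rw [hθ m, hθ l]; field_simp; ring
  -- vanishing of plain cosine sums over the grid
  have hz : ∀ (j : ℕ), 1 ≤ j → j ≤ J → ∀ y : ℝ,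
      ∑ l ∈ Finset.Icc 1 n, Real.cos ((j:ℝ) * (y - θ l)) = 0 := by
    intro j hj1 hj2 y
    have ht : ¬(n:ℤ) ∣ (-(j:ℤ)) := by
      apply not_dvd_of_small
      · omega
      · rw [abs_neg, abs_of_nonneg (Int.natCast_nonneg j)]; push_cast; omega
    have h := grid_cos_sum n hnpos θ hθ (-(j:ℤ)) ht ((j:ℝ) * y)
    rw [← h]
    apply Finset.sum_congr rfl
    intro l _
    congr 1
    push_cast
    ring
  -- Claim B
  have claimB : ∀ l : ℕ, ∑ m ∈ Finset.Icc 1 n, ρ (θ m - θ l)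
      = ∑ m ∈ Finset.Icc 1 n, ρ (θ m) := by
    intro l
    set G : ℤ → ℝ := fun k => ρ (2 * π * k / n) with hG
    have hGper : ∀ k : ℤ, G (k + n) = G k := by
      intro k
      simp only [hG]
      push_cast
      rw [show 2 * π * ((k:ℝ) + n) / n = 2 * π * k / n + 2 * π from by field_simp]
      exact hρper _
    have e1 : ∑ m ∈ Finset.Icc 1 n, ρ (θ m - θ l)
        = ∑ m ∈ Finset.Icc 1 n, G (m + (-(l:ℤ))) := by
      apply Finset.sum_congr rfl; intro m _
      simp only [hG]; rw [hθdiff m l]; congr 1; push_cast; ring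
    have e2 : ∑ m ∈ Finset.Icc 1 n, ρ (θ m)
        = ∑ m ∈ Finset.Icc 1 n, G (m + (-(c:ℤ))) := by
      apply Finset.sum_congr rfl; intro m _
      simp only [hG]; rw [hθc m]; congr 1; push_cast; ring
    rw [e1, e2, sum_shift n G hGper, sum_shift n G hGper]
  -- Claim C
  have claimC : ∀ (j l : ℕ),
      ∑ m ∈ Finset.Icc 1 n, ρ (θ m - θ l) * Real.cos ((j:ℝ) * (η - θ m))
      = Real.cos ((j:ℝ) * (η - θ l)) *
          ∑ m ∈ Finset.Icc 1 n, ρ (θ m) * Real.cos ((j:ℝ) * θ m) := by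
    intro j l
    set Hf : ℤ → ℝ := fun k => ρ (2 * π * k / n) *
      Real.cos ((j:ℝ) * (η - θ l - 2 * π * k / n)) with hHf
    have hHper : ∀ k : ℤ, Hf (k + n) = Hf k := by
      intro k
      simp only [hHf]
      push_cast
      have hρp : ρ (2 * π * ((k:ℝ) + n) / n) = ρ (2 * π * (k:ℝ) / n) := by
        rw [show 2 * π * ((k:ℝ) + n) / n = 2 * π * (k:ℝ) / n + 2 * π from by field_simp]
        exact hρper _
      have hcosp : Real.cos ((j:ℝ) * (η - θ l - 2 * π * ((k:ℝ) + n) / n))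
          = Real.cos ((j:ℝ) * (η - θ l - 2 * π * (k:ℝ) / n)) := by
        rw [show (j:ℝ) * (η - θ l - 2 * π * ((k:ℝ) + n) / n)
            = (j:ℝ) * (η - θ l - 2 * π * (k:ℝ) / n) - ((j:ℤ):ℝ) * (2 * π) from by
          push_cast; field_simp; ring]
        exact Real.cos_sub_int_mul_two_pi _ _
      rw [hρp, hcosp]
    have e1 : ∑ m ∈ Finset.Icc 1 n, ρ (θ m - θ l) * Real.cos ((j:ℝ) * (η - θ m))
        = ∑ m ∈ Finset.Icc 1 n, Hf (m + (-(l:ℤ))) := by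
      apply Finset.sum_congr rfl; intro m _
      simp only [hHf]
      have hd := hθdiff m l
      congr 1
      · rw [hd]; congr 1; push_cast; ring
      · congr 1; push_cast; linear_combination (-(j:ℝ)) * hd
    have e2 : ∑ m ∈ Finset.Icc 1 n, Hf (m + (-(c:ℤ)))
        = ∑ m ∈ Finset.Icc 1 n, ρ (θ m) * Real.cos ((j:ℝ) * (η - θ l - θ m)) := by
      apply Finset.sum_congr rfl; intro m _
      simp only [hHf]
      have hc := hθc m
      congr 1
      · rw [hc]; congr 1; push_cast; ring
      · congr 1; push_cast; linear_combination (j:ℝ) * hc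
    have e3 : ∑ m ∈ Finset.Icc 1 n, ρ (θ m) * Real.cos ((j:ℝ) * (η - θ l - θ m))
        = Real.cos ((j:ℝ) * (η - θ l)) *
            (∑ m ∈ Finset.Icc 1 n, ρ (θ m) * Real.cos ((j:ℝ) * θ m))
          + Real.sin ((j:ℝ) * (η - θ l)) *
            (∑ m ∈ Finset.Icc 1 n, ρ (θ m) * Real.sin ((j:ℝ) * θ m)) := by
      rw [Finset.mul_sum, Finset.mul_sum, ← Finset.sum_add_distrib]
      apply Finset.sum_congr rfl; intro m _
      rw [show (j:ℝ) * (η - θ l - θ m) = (j:ℝ) * (η - θ l) - (j:ℝ) * θ m from by ring,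
        Real.cos_sub]
      ring
    rw [e1, sum_shift n Hf hHper, ← sum_shift n Hf hHper (-(c:ℤ)), e2, e3,
      rho_sin_sum n hodd θ hθ ρ hρeven ((j:ℝ))]
    ring
  -- Step 1
  have step1 : ∀ l : ℕ, ∑ m ∈ Finset.Icc 1 n, ρ (θ m - θ l) * S m η
      = σ0 + ∑ j ∈ Finset.Icc 1 J, σ j * Real.cos ((j:ℝ) * (η - θ l)) := by
    intro l
    have expand : ∀ m, ρ (θ m - θ l) * S m η
        = ρ (θ m - θ l) * (1 / (n:ℝ))
          + (2 / (n:ℝ)) * ∑ j ∈ Finset.Icc 1 J,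
              ρ (θ m - θ l) * Real.cos ((j:ℝ) * (η - θ m)) := by
      intro m
      rw [hS m η, mul_add]
      congr 1
      rw [Finset.mul_sum, Finset.mul_sum, Finset.mul_sum]
      exact Finset.sum_congr rfl fun j _ => by ring
    rw [Finset.sum_congr rfl fun m _ => expand m, Finset.sum_add_distrib,
      ← Finset.sum_mul, ← Finset.mul_sum, Finset.sum_comm, claimB l]
    have hjs : ∀ j ∈ Finset.Icc 1 J,
        ∑ m ∈ Finset.Icc 1 n, ρ (θ m - θ l) * Real.cos ((j:ℝ) * (η - θ m))
        = Real.cos ((j:ℝ) * (η - θ l)) * ((n:ℝ) / 2 * σ j) := by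
      intro j _
      rw [claimC j l]
      congr 1
      rw [hσ j]
      first
      | (field_simp; ring)
      | field_simp
    rw [Finset.sum_congr rfl hjs, hσ0]
    rw [Finset.mul_sum]
    congr 1
    · ring
    · apply Finset.sum_congr rfl; intro j _; field_simp
  -- Claim D
  have claimD : ∑ l ∈ Finset.Icc 1 n, S l x = 1 := by
    rw [Finset.sum_congr rfl fun l _ => hS l x, Finset.sum_add_distrib,
      Finset.sum_const, Nat.card_Icc, ← Finset.mul_sum, Finset.sum_comm]
    have hz' : ∀ j ∈ Finset.Icc 1 J,
        ∑ l ∈ Finset.Icc 1 n, Real.cos ((j:ℝ) * (x - θ l)) = 0 := by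
      intro j hj
      simp only [Finset.mem_Icc] at hj
      exact hz j hj.1 hj.2 x
    rw [Finset.sum_congr rfl hz', Finset.sum_const, smul_zero, mul_zero, add_zero]
    simp only [Nat.add_sub_cancel, nsmul_eq_mul]
    field_simp
  -- Claim E
  have claimE : ∀ j ∈ Finset.Icc 1 J,
      ∑ l ∈ Finset.Icc 1 n, S l x * Real.cos ((j:ℝ) * (η - θ l))
      = Real.cos ((j:ℝ) * (η - x)) := by
    intro j hj
    have hjm := Finset.mem_Icc.mp hj
    have expand : ∀ l, S l x * Real.cos ((j:ℝ) * (η - θ l))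
        = (1 / (n:ℝ)) * Real.cos ((j:ℝ) * (η - θ l))
          + (2 / (n:ℝ)) * ∑ i ∈ Finset.Icc 1 J,
              Real.cos ((i:ℝ) * (x - θ l)) * Real.cos ((j:ℝ) * (η - θ l)) := by
      intro l
      rw [hS l x, add_mul, mul_assoc, Finset.sum_mul]
    rw [Finset.sum_congr rfl fun l _ => expand l, Finset.sum_add_distrib,
      ← Finset.mul_sum, ← Finset.mul_sum, Finset.sum_comm]
    have h0 : ∑ l ∈ Finset.Icc 1 n, Real.cos ((j:ℝ) * (η - θ l)) = 0 :=
      hz j hjm.1 hjm.2 η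
    have hor : ∀ i ∈ Finset.Icc 1 J,
        ∑ l ∈ Finset.Icc 1 n, Real.cos ((i:ℝ) * (x - θ l)) * Real.cos ((j:ℝ) * (η - θ l))
        = if i = j then ((n:ℝ) / 2) * Real.cos ((j:ℝ) * (η - x)) else 0 :=
      fun i hi => ortho_sum n hnpos θ hθ J h2J i j hi hj x η
    rw [h0, Finset.sum_congr rfl hor, Finset.sum_ite_eq' (Finset.Icc 1 J) j
      (fun _ => ((n:ℝ) / 2) * Real.cos ((j:ℝ) * (η - x))), if_pos hj]
    field_simp
    ring
  -- Step 2: assemble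
  calc ∑ l ∈ Finset.Icc 1 n, ∑ m ∈ Finset.Icc 1 n, ρ (θ m - θ l) * S l x * S m η
      = ∑ l ∈ Finset.Icc 1 n, S l x * ∑ m ∈ Finset.Icc 1 n, ρ (θ m - θ l) * S m η := by
        apply Finset.sum_congr rfl; intro l _
        rw [Finset.mul_sum]
        apply Finset.sum_congr rfl; intro m _; ring
    _ = ∑ l ∈ Finset.Icc 1 n, S l x *
          (σ0 + ∑ j ∈ Finset.Icc 1 J, σ j * Real.cos ((j:ℝ) * (η - θ l))) := by
        apply Finset.sum_congr rfl; intro l _; rw [step1 l]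
    _ = (∑ l ∈ Finset.Icc 1 n, S l x) * σ0
        + ∑ j ∈ Finset.Icc 1 J, σ j *
            ∑ l ∈ Finset.Icc 1 n, S l x * Real.cos ((j:ℝ) * (η - θ l)) := by
        simp only [mul_add, Finset.mul_sum]
        rw [Finset.sum_add_distrib, ← Finset.sum_mul, Finset.sum_comm]
        congr 1
        apply Finset.sum_congr rfl; intro j _
        apply Finset.sum_congr rfl; intro l _; ring
    _ = σ0 + ∑ j ∈ Finset.Icc 1 J, σ j * Real.cos ((j:ℝ) * (η - x)) := by
        rw [claimD, one_mul]
        congr 1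
        apply Finset.sum_congr rfl; intro j hj
        rw [claimE j hj]
end
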